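/- Every clause learned by the Backtrack rule in an SCL(T) run is entailed by N ∪ U: the invariant N ⊨ U is preserved by all SCL(T) rules. -/
import Mathlib


/-- The conflict clause in any SCL(T) state is obtained from a clause of `S = N ∪ U`
by finitely many resolution/factorization inferences with clauses of `S`. -/
inductive Derives {Clause : Type} (Res : Clause → Clause → Clause → Prop)
    (Fact : Clause → Clause → Prop) (S : Set Clause) : Clause → Prop
  | mem {C} : C ∈ S → Derives Res Fact S C
  | res {C D E} : Derives Res Fact S C → D ∈ S → Res C D E → Derives Res Fact S E
  | fact {C E} : Derives Res Fact S C → Fact C E → Derives Res Fact S E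

/-- Soundness of clause learning: if resolution and factorization are sound for the
entailment relation, entailment satisfies membership, monotonicity, and cut, and
`N ⊨ U`, then any clause derived from `N ∪ U` (in particular the learned clause
`D ∨ L` at Backtrack) is entailed by `N`, hence `N ⊨ U ∪ {D ∨ L}`. -/
theorem learned_clause_sound {Clause : Type}
    (Res : Clause → Clause → Clause → Prop) (Fact : Clause → Clause → Prop)
    (entails : Set Clause → Clause → Prop)
    (hmem : ∀ (S : Set Clause) (C : Clause), C ∈ S → entails S C)
    (hmono : ∀ (S S' : Set Clause) (C : Clause), S ⊆ S' → entails S C → entails S' C)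
    (hcut : ∀ (S T : Set Clause) (C : Clause),
      (∀ D ∈ T, entails S D) → entails (S ∪ T) C → entails S C)
    (hres : ∀ C D E : Clause, Res C D E → entails {C, D} E)
    (hfact : ∀ C E : Clause, Fact C E → entails {C} E)
    (N U : Set Clause) (hU : ∀ C ∈ U, entails N C)
    (L : Clause) (hL : Derives Res Fact (N ∪ U) L) :
    entails N L ∧ ∀ C ∈ U ∪ {L}, entails N C := by
  have key : entails N L := by
    induction hL with
    | mem h =>
      cases h with
      | inl h => exact hmem N _ h
      | inr h => exact hU _ h
    | res hC hD hR ih =>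
      rename_i C D E
      have hND : entails N D := by
        cases hD with
        | inl h => exact hmem N _ h
        | inr h => exact hU _ h
      apply hcut N {C, D} E
      · intro X hX
        rcases hX with h | h
        · exact h ▸ ih
        · exact h ▸ hND
      · exact hmono _ _ _ (Set.subset_union_right) (hres C D E hR)
    | fact hC hF ih =>
      rename_i C E
      apply hcut N {C} E
      · intro X hX
        exact hX ▸ ih
      · exact hmono _ _ _ (Set.subset_union_right) (hfact C E hF)
  refine ⟨key, fun C hC => ?_⟩
  rcases hC with h | h
  · exact hU _ h
  · exact h ▸ key
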